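/- Let n ∈ ℕ, p ∈ (1/n, 1) and X ~ Bin(n,p). Then P(X ≥ n·p) > 1/4. -/

import Mathlib

open Finset

open intervalIntegral

private lemma hasDerivAt_term (a b : ℕ) (x : ℝ) :
    HasDerivAt (fun t : ℝ => t ^ (a+1) * (1 - t) ^ b)
      (((a:ℝ)+1) * x ^ a * (1 - x) ^ b - (b:ℝ) * x ^ (a+1) * (1 - x) ^ (b-1)) x := by
  have h0 : HasDerivAt (fun t : ℝ => 1 - t) (-1) x := (hasDerivAt_id x).const_sub 1
  have h1 : HasDerivAt (fun t : ℝ => t ^ (a+1)) (((a:ℝ)+1) * x ^ a) x := by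
    simpa using hasDerivAt_pow (a+1) x
  have h2 := h1.mul (h0.pow b)
  refine h2.congr_deriv ?_
  simp only [Pi.pow_apply]
  push_cast
  ring

private lemma ftc_core (c : ℝ) (a b : ℕ) (u v : ℝ) :
    ∫ t in u..v, c * (((a:ℝ)+1) * t ^ a * (1 - t) ^ b - (b:ℝ) * t ^ (a+1) * (1 - t) ^ (b-1))
      = c * (v ^ (a+1) * (1 - v) ^ b) - c * (u ^ (a+1) * (1 - u) ^ b) := by
  have h : ∀ x ∈ Set.uIcc u v, HasDerivAt (fun t : ℝ => c * (t ^ (a+1) * (1 - t) ^ b))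
      (c * (((a:ℝ)+1) * x ^ a * (1 - x) ^ b - (b:ℝ) * x ^ (a+1) * (1 - x) ^ (b-1))) x :=
    fun x _ => (hasDerivAt_term a b x).const_mul c
  exact intervalIntegral.integral_eq_sub_of_hasDerivAt h
    ((Continuous.intervalIntegrable (by continuity) u v))

private lemma mono_aux (a b : ℕ) :
    MonotoneOn (fun t : ℝ => t ^ (a+1) * (1 - t) ^ (b+1))
      (Set.Icc 0 (((a:ℝ)+1)/((a:ℝ)+(b:ℝ)+2))) := by
  have hd : (0:ℝ) < (a:ℝ)+(b:ℝ)+2 := by positivity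
  have hq1 : ((a:ℝ)+1)/((a:ℝ)+(b:ℝ)+2) < 1 := by
    rw [div_lt_one hd]; linarith
  apply monotoneOn_of_deriv_nonneg (convex_Icc _ _)
  · exact Continuous.continuousOn (by fun_prop)
  · intro x _
    exact (hasDerivAt_term a (b+1) x).differentiableAt.differentiableWithinAt
  · intro x hx
    rw [interior_Icc, Set.mem_Ioo] at hx
    obtain ⟨hx0, hxq⟩ := hx
    rw [(hasDerivAt_term a (b+1) x).deriv]
    have hx1 : x < 1 := lt_trans hxq hq1
    have key : ((a:ℝ)+1) * x ^ a * (1 - x) ^ (b+1) - ((b:ℝ)+1) * x ^ (a+1) * (1 - x) ^ b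
        = x ^ a * (1 - x) ^ b * (((a:ℝ)+1) * (1-x) - ((b:ℝ)+1) * x) := by
      rw [pow_succ x a, pow_succ (1-x) b]
      ring
    have hbr : 0 ≤ ((a:ℝ)+1) * (1-x) - ((b:ℝ)+1) * x := by
      rw [lt_div_iff₀ hd] at hxq
      nlinarith
    have h1x : (0:ℝ) ≤ 1 - x := by linarith
    have hnn : (0:ℝ) ≤ x ^ a * (1 - x) ^ b :=
      mul_nonneg (pow_nonneg hx0.le a) (pow_nonneg h1x b)
    push_cast
    rw [key]
    exact mul_nonneg hnn hbr

private lemma tail_repr (n : ℕ) (p : ℝ) : ∀ d a : ℕ, a + 1 + d = n →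
    ∑ j ∈ Icc (a+1) n, (n.choose j : ℝ) * p ^ j * (1 - p) ^ (n - j)
      = ∫ t in (0:ℝ)..p, ((a:ℝ)+1) * ((n.choose (a+1) : ℝ)) * (t ^ a * (1 - t) ^ (n - (a+1))) := by
  intro d
  induction d with
  | zero =>
    intro a ha
    have hn : n = a + 1 := by omega
    subst hn
    rw [Finset.Icc_self, Finset.sum_singleton]
    simp only [Nat.sub_self, pow_zero, mul_one, Nat.choose_self, Nat.cast_one, one_mul]
    rw [intervalIntegral.integral_const_mul, integral_pow]
    have : ((a:ℝ)+1) ≠ 0 := by positivity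
    field_simp
    simp
  | succ d ih =>
    intro a ha
    have h1 : a + 1 ≤ n := by omega
    have h2 : a + 1 + 1 + d = n := by omega
    have hpeel : ∑ j ∈ Icc (a+1) n, (n.choose j : ℝ) * p ^ j * (1 - p) ^ (n - j)
        = (n.choose (a+1) : ℝ) * p ^ (a+1) * (1 - p) ^ (n - (a+1))
          + ∑ j ∈ Icc (a+2) n, (n.choose j : ℝ) * p ^ j * (1 - p) ^ (n - j) := by
      have hins : Icc (a+1) n = insert (a+1) (Icc (a+2) n) := by
        ext j
        simp only [Finset.mem_Icc, Finset.mem_insert]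
        omega
      rw [hins, Finset.sum_insert (by simp)]
    rw [hpeel, ih (a+1) h2]
    have hB1 : 1 ≤ n - (a+1) := by omega
    have hco : ((n.choose (a+1+1) : ℝ)) * ((a:ℝ)+1+1) = ((n.choose (a+1) : ℝ)) * ((n - (a+1) : ℕ) : ℝ) := by
      exact_mod_cast congrArg (Nat.cast (R := ℝ)) (Nat.choose_succ_right_eq n (a+1))
    have hsub : (∫ t in (0:ℝ)..p, ((a:ℝ)+1) * ((n.choose (a+1) : ℝ)) * (t ^ a * (1 - t) ^ (n - (a+1))))
        - (∫ t in (0:ℝ)..p, ((a:ℝ)+1+1) * ((n.choose (a+1+1) : ℝ)) * (t ^ (a+1) * (1 - t) ^ (n - (a+1+1))))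
        = (n.choose (a+1) : ℝ) * p ^ (a+1) * (1 - p) ^ (n - (a+1)) := by
      rw [← intervalIntegral.integral_sub (Continuous.intervalIntegrable (by fun_prop) 0 p)
        (Continuous.intervalIntegrable (by fun_prop) 0 p)]
      have hfun : (fun t : ℝ => ((a:ℝ)+1) * ((n.choose (a+1) : ℝ)) * (t ^ a * (1 - t) ^ (n - (a+1)))
          - ((a:ℝ)+1+1) * ((n.choose (a+1+1) : ℝ)) * (t ^ (a+1) * (1 - t) ^ (n - (a+1+1))))
          = fun t : ℝ => (n.choose (a+1) : ℝ) * (((a:ℝ)+1) * t ^ a * (1 - t) ^ (n - (a+1))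
              - ((n - (a+1) : ℕ) : ℝ) * t ^ (a+1) * (1 - t) ^ ((n - (a+1)) - 1)) := by
        funext t
        have hBe : n - (a + 1 + 1) = n - (a + 1) - 1 := by omega
        have hBpow : (1-t) ^ (n-(a+1)) = (1-t) ^ (n-(a+1)-1) * (1-t) := by
          rw [← pow_succ]
          congr 1
          omega
        rw [hBe, hBpow]
        linear_combination (-(t ^ (a+1) * (1 - t) ^ (n - (a+1) - 1))) * hco
      rw [hfun, ftc_core]
      rw [zero_pow (by omega : a + 1 ≠ 0)]
      ring
    push_cast at hsub ⊢
    linarith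

noncomputable def Jfun (m r : ℕ) : ℝ :=
  ((m:ℝ)+1) * ((m+1+r).choose (m+1) : ℝ) * ∫ t in (0:ℝ)..((m:ℝ)/((m:ℝ)+1+(r:ℝ))), t ^ m * (1 - t) ^ r

private lemma Jfun_zero (m : ℕ) : Jfun m 0 = ((m:ℝ)/((m:ℝ)+1)) ^ (m+1) := by
  unfold Jfun
  simp only [Nat.cast_zero, add_zero, Nat.choose_self, Nat.cast_one, mul_one, pow_zero]
  rw [integral_pow]
  have h : ((m:ℝ)+1) ≠ 0 := by positivity
  rw [zero_pow (by omega : m + 1 ≠ 0)]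
  field_simp
  ring

private lemma Jfun_step (m₀ r : ℕ) : Jfun (m₀+1) r ≤ Jfun (m₀+1) (r+1) := by
  obtain ⟨q, hq⟩ : ∃ q : ℝ, q = ((m₀:ℝ)+1)/((m₀:ℝ)+(r:ℝ)+2) := ⟨_, rfl⟩
  obtain ⟨q', hq'⟩ : ∃ q' : ℝ, q' = ((m₀:ℝ)+1)/((m₀:ℝ)+(r:ℝ)+3) := ⟨_, rfl⟩
  obtain ⟨c1, hc1⟩ : ∃ c : ℕ, c = (m₀+2+r).choose (m₀+1) := ⟨_, rfl⟩
  obtain ⟨c2, hc2⟩ : ∃ c : ℕ, c = (m₀+2+r).choose (m₀+2) := ⟨_, rfl⟩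
  obtain ⟨c3, hc3⟩ : ∃ c : ℕ, c = (m₀+3+r).choose (m₀+2) := ⟨_, rfl⟩
  have hq0 : 0 < q' := by rw [hq']; positivity
  have hqq : 0 < q := by rw [hq]; positivity
  have hq'q : q' ≤ q := by
    rw [hq, hq']
    gcongr
    linarith
  have hq1 : q < 1 := by
    rw [hq, div_lt_one (by positivity)]
    linarith
  -- rewrite both sides of the goal
  have hJlow : Jfun (m₀+1) r
      = ((m₀:ℝ)+2) * (c2:ℝ) * ∫ t in (0:ℝ)..q, t ^ (m₀+1) * (1 - t) ^ r := by
    unfold Jfun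
    have hb : ((m₀+1:ℕ):ℝ)/(((m₀+1:ℕ):ℝ)+1+(r:ℝ)) = q := by
      rw [hq]; push_cast; congr 1 <;> ring
    rw [hb, show m₀+1+1+r = m₀+2+r by omega, show m₀+1+1 = m₀+2 by omega, ← hc2]
    push_cast
    ring
  have hJhigh : Jfun (m₀+1) (r+1)
      = ((m₀:ℝ)+2) * (c3:ℝ) * ∫ t in (0:ℝ)..q', t ^ (m₀+1) * (1 - t) ^ (r+1) := by
    unfold Jfun
    have hb : ((m₀+1:ℕ):ℝ)/(((m₀+1:ℕ):ℝ)+1+((r+1:ℕ):ℝ)) = q' := by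
      rw [hq']; push_cast; congr 1 <;> ring
    rw [hb, show m₀+1+1+(r+1) = m₀+3+r by omega, show m₀+1+1 = m₀+2 by omega, ← hc3]
    push_cast
    ring
  -- pointwise bound on [q', q]
  have hptw : ∀ t ∈ Set.Icc q' q, t ^ (m₀+1) * (1 - t) ^ (r+1) ≤ q ^ (m₀+1) * (1 - q) ^ (r+1) := by
    intro t ht
    obtain ⟨ht1, ht2⟩ := ht
    have h1 : t ∈ Set.Icc (0:ℝ) (((m₀:ℝ)+1)/((m₀:ℝ)+(r:ℝ)+2)) := ⟨le_trans hq0.le ht1, by rw [← hq]; exact ht2⟩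
    have h2 : q ∈ Set.Icc (0:ℝ) (((m₀:ℝ)+1)/((m₀:ℝ)+(r:ℝ)+2)) := ⟨hqq.le, by rw [← hq]⟩
    exact mono_aux m₀ r h1 h2 ht2
  have hintb : (∫ t in q'..q, t ^ (m₀+1) * (1 - t) ^ (r+1))
      ≤ (q - q') * (q ^ (m₀+1) * (1 - q) ^ (r+1)) := by
    have := intervalIntegral.integral_mono_on (μ := MeasureTheory.volume) hq'q
      (Continuous.intervalIntegrable (by fun_prop) q' q)
      ((continuous_const).intervalIntegrable q' q) hptw
    simp only [intervalIntegral.integral_const, smul_eq_mul] at this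
    linarith
  have hsplit : (∫ t in (0:ℝ)..q', t ^ (m₀+1) * (1 - t) ^ (r+1))
      = (∫ t in (0:ℝ)..q, t ^ (m₀+1) * (1 - t) ^ (r+1))
        - ∫ t in q'..q, t ^ (m₀+1) * (1 - t) ^ (r+1) := by
    rw [← intervalIntegral.integral_add_adjacent_intervals
      (Continuous.intervalIntegrable (by fun_prop) 0 q')
      (Continuous.intervalIntegrable (by fun_prop) q' q)]
    ring
  -- nat coefficient identities, cast to ℝ
  have hco1 : ((m₀:ℝ)+2) * (c2:ℝ) = ((r:ℝ)+1) * (c1:ℝ) := by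
    have h := Nat.choose_succ_right_eq (m₀+2+r) (m₀+1)
    rw [show m₀+2+r - (m₀+1) = r+1 by omega, show m₀+1+1 = m₀+2 by omega, ← hc1, ← hc2] at h
    have h' := congrArg (Nat.cast (R := ℝ)) h
    push_cast at h'
    linarith
  have hpascal : (c3:ℝ) = (c1:ℝ) + (c2:ℝ) := by
    have h : (m₀+3+r).choose (m₀+2) = (m₀+2+r).choose (m₀+1) + (m₀+2+r).choose (m₀+2) := by
      rw [show m₀+3+r = (m₀+2+r)+1 by omega, show m₀+2 = (m₀+1)+1 by omega]
      exact Nat.choose_succ_succ _ _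
    rw [← hc1, ← hc2, ← hc3] at h
    exact_mod_cast congrArg (Nat.cast (R := ℝ)) h
  have hco2 : ((m₀:ℝ)+2) * (c3:ℝ) = ((m₀:ℝ)+(r:ℝ)+3) * (c1:ℝ) := by
    have h := Nat.add_one_mul_choose_eq (m₀+2+r) (m₀+1)
    rw [show m₀+2+r+1 = m₀+3+r by omega, show m₀+1+1 = m₀+2 by omega, ← hc1, ← hc3] at h
    have h' := congrArg (Nat.cast (R := ℝ)) h
    push_cast at h'
    linarith
  -- integral identity
  have hiden : ((m₀:ℝ)+2) * (c3:ℝ) * (∫ t in (0:ℝ)..q, t ^ (m₀+1) * (1 - t) ^ (r+1))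
      = ((m₀:ℝ)+2) * (c2:ℝ) * (∫ t in (0:ℝ)..q, t ^ (m₀+1) * (1 - t) ^ r)
        + (c1:ℝ) * (q ^ (m₀+2) * (1 - q) ^ (r+1)) := by
    have hftc := ftc_core (c1:ℝ) (m₀+1) (r+1) 0 q
    rw [zero_pow (by omega : m₀ + 1 + 1 ≠ 0)] at hftc
    simp only [Nat.add_sub_cancel] at hftc
    push_cast at hftc
    have hfun : (fun t : ℝ => ((m₀:ℝ)+2) * (c3:ℝ) * (t ^ (m₀+1) * (1 - t) ^ (r+1))
          - ((m₀:ℝ)+2) * (c2:ℝ) * (t ^ (m₀+1) * (1 - t) ^ r))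
        = fun t : ℝ => (c1:ℝ) * (((m₀:ℝ)+1+1) * t ^ (m₀+1) * (1 - t) ^ (r+1)
            - ((r:ℝ)+1) * t ^ (m₀+1+1) * (1 - t) ^ r) := by
      funext t
      have hps : (1-t) ^ (r+1) = (1-t) ^ r * (1-t) := pow_succ _ _
      rw [hps]
      linear_combination (t ^ (m₀+1) * ((1-t)^r * (1-t)) * ((m₀:ℝ)+2)) * hpascal
        - (t ^ (m₀+1) * (1-t)^r * (1 - (1-t))) * hco1
    have hsub2 : ((m₀:ℝ)+2) * (c3:ℝ) * (∫ t in (0:ℝ)..q, t ^ (m₀+1) * (1 - t) ^ (r+1))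
        - ((m₀:ℝ)+2) * (c2:ℝ) * (∫ t in (0:ℝ)..q, t ^ (m₀+1) * (1 - t) ^ r)
        = (c1:ℝ) * (q ^ (m₀+2) * (1 - q) ^ (r+1)) := by
      rw [← intervalIntegral.integral_const_mul, ← intervalIntegral.integral_const_mul,
        ← intervalIntegral.integral_sub (Continuous.intervalIntegrable (by fun_prop) 0 q)
          (Continuous.intervalIntegrable (by fun_prop) 0 q)]
      rw [hfun]
      rw [hftc]
      rw [show m₀+1+1 = m₀+2 by omega]
      ring
    linarith
  -- coefficient cancellation
  have hcoef : ((m₀:ℝ)+2) * (c3:ℝ) * (q - q') = (c1:ℝ) * q := by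
    rw [hco2, hq, hq']
    have d1 : ((m₀:ℝ)+(r:ℝ)+2) ≠ 0 := by positivity
    have d2 : ((m₀:ℝ)+(r:ℝ)+3) ≠ 0 := by positivity
    field_simp
    ring
  have hc3nn : (0:ℝ) ≤ ((m₀:ℝ)+2) * (c3:ℝ) := by positivity
  -- combine
  rw [hJlow, hJhigh, hsplit]
  have hmul : ((m₀:ℝ)+2) * (c3:ℝ) * (∫ t in q'..q, t ^ (m₀+1) * (1 - t) ^ (r+1))
      ≤ (c1:ℝ) * (q ^ (m₀+2) * (1 - q) ^ (r+1)) := by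
    calc ((m₀:ℝ)+2) * (c3:ℝ) * (∫ t in q'..q, t ^ (m₀+1) * (1 - t) ^ (r+1))
        ≤ ((m₀:ℝ)+2) * (c3:ℝ) * ((q - q') * (q ^ (m₀+1) * (1 - q) ^ (r+1))) :=
          mul_le_mul_of_nonneg_left hintb hc3nn
      _ = (((m₀:ℝ)+2) * (c3:ℝ) * (q - q')) * (q ^ (m₀+1) * (1 - q) ^ (r+1)) := by ring
      _ = (c1:ℝ) * q * (q ^ (m₀+1) * (1 - q) ^ (r+1)) := by rw [hcoef]
      _ = (c1:ℝ) * (q ^ (m₀+2) * (1 - q) ^ (r+1)) := by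
          rw [show m₀+2 = (m₀+1)+1 by omega, pow_succ]
          ring
  nlinarith [hiden, hmul]

private lemma trunc_binom (A : ℕ) : ∀ n : ℕ, A ^ (n+1) + (n+1) * A ^ n ≤ (A+1) ^ (n+1) := by
  intro n
  induction n with
  | zero => simp
  | succ n ih =>
    have h1 : (A+1) ^ (n+2) = (A+1) * (A+1) ^ (n+1) := by ring
    have h2 : (A+1) * (A ^ (n+1) + (n+1) * A ^ n) ≤ (A+1) * (A+1) ^ (n+1) :=
      Nat.mul_le_mul_left _ ih
    have h3 : A ^ (n+2) + (n+2) * A ^ (n+1) ≤ (A+1) * (A ^ (n+1) + (n+1) * A ^ n) := by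
      have e : (A+1) * (A ^ (n+1) + (n+1) * A ^ n)
          = A ^ (n+2) + (n+2) * A ^ (n+1) + (n+1) * A ^ n := by ring
      rw [e]
      omega
    show A ^ (n+2) + (n+2) * A ^ (n+1) ≤ (A+1) ^ (n+2)
    omega

private lemma nat_key (m : ℕ) : (m+2) ^ (m+2) * m ^ (m+1) ≤ (m+1) ^ (2*m+3) := by
  have hA : (m+1) * (m+1) = m * (m+2) + 1 := by ring
  have h1 : (m+1) ^ (2*m+3) = (m+1) * ((m*(m+2)+1) ^ (m+1)) := by
    have e : (m*(m+2)+1) = (m+1)^2 := by ring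
    rw [e, ← pow_mul, ← pow_succ']
    congr 1
  have h2 := trunc_binom (m*(m+2)) m
  have h3 : (m+1) * ((m*(m+2)) ^ (m+1) + (m+1) * (m*(m+2)) ^ m)
      ≤ (m+1) * ((m*(m+2)+1) ^ (m+1)) := Nat.mul_le_mul_left _ h2
  have h4 : (m+2) * (m*(m+2)) ^ (m+1)
      ≤ (m+1) * ((m*(m+2)) ^ (m+1) + (m+1) * (m*(m+2)) ^ m) := by
    have e1 : (m+1) * ((m*(m+2)) ^ (m+1) + (m+1) * (m*(m+2)) ^ m)
        = (m+1) * (m*(m+2)) ^ (m+1) + ((m+1)*(m+1)) * (m*(m+2)) ^ m := by ring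
    have e2 : ((m+1)*(m+1)) * (m*(m+2)) ^ m = (m*(m+2)) ^ (m+1) + (m*(m+2)) ^ m := by
      rw [hA]
      ring
    rw [e1, e2]
    have : (m+2) * (m*(m+2)) ^ (m+1) = (m+1) * (m*(m+2)) ^ (m+1) + (m*(m+2)) ^ (m+1) := by ring
    omega
  have h5 : (m+2) ^ (m+2) * m ^ (m+1) = (m+2) * (m*(m+2)) ^ (m+1) := by
    rw [mul_pow]
    ring
  rw [h5, h1]
  exact le_trans h4 h3

private lemma quarter (m : ℕ) (hm : 1 ≤ m) : (1/4 : ℝ) ≤ ((m:ℝ)/((m:ℝ)+1)) ^ (m+1) := by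
  induction m with
  | zero => omega
  | succ k ih =>
    rcases Nat.eq_or_lt_of_le hm with h | h
    · -- k+1 = 1, i.e. k = 0
      have hk : k = 0 := by omega
      subst hk
      norm_num
    · have hk1 : 1 ≤ k := by omega
      have step : ((k:ℝ)/((k:ℝ)+1)) ^ (k+1) ≤ (((k+1:ℕ):ℝ)/(((k+1:ℕ):ℝ)+1)) ^ (k+1+1) := by
      -- (m+1)/(m+2) version: need m^{m+1}(m+2)^{m+2} ≤ (m+1)^{2m+3}
        push_cast
        rw [div_pow, div_pow]
        rw [div_le_div_iff₀ (by positivity) (by positivity)]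
        have hcast := nat_key k
        have hc' : ((k:ℝ)+2) ^ (k+2) * (k:ℝ) ^ (k+1) ≤ ((k:ℝ)+1) ^ (2*k+3) := by
          exact_mod_cast hcast
        calc (k:ℝ) ^ (k+1) * ((k:ℝ)+1+1) ^ (k+1+1)
            = ((k:ℝ)+2) ^ (k+2) * (k:ℝ) ^ (k+1) := by
              rw [show k+1+1 = k+2 from rfl]; ring
          _ ≤ ((k:ℝ)+1) ^ (2*k+3) := hc'
          _ = ((k:ℝ)+1) ^ (k+1+1) * ((k:ℝ)+1) ^ (k+1) := by
              rw [← pow_add]; congr 1; omega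
        --
      exact le_trans (ih hk1) step

/-- For `X ~ Bin(n,p)` with `p ∈ (1/n, 1)`, `P(X ≥ np) > 1/4`. -/
theorem binomial_exceeds_mean (n : ℕ) (p : ℝ) (hp0 : 1 / (n : ℝ) < p) (hp1 : p < 1) :
    (1 / 4 : ℝ) <
      ∑ k ∈ (Finset.range (n + 1)).filter (fun k : ℕ => (n : ℝ) * p ≤ (k : ℝ)),
        (n.choose k : ℝ) * p ^ k * (1 - p) ^ (n - k) := by
  rcases Nat.eq_zero_or_pos n with hn | hn
  · subst hn
    norm_num
  have hn0 : (0:ℝ) < n := by exact_mod_cast hn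
  have hp_pos : 0 < p := lt_trans (by positivity) hp0
  have hnp1 : 1 < (n:ℝ) * p := by
    rw [div_lt_iff₀ hn0] at hp0
    linarith
  have hnpn : (n:ℝ) * p < n := by nlinarith
  have hk2 : 2 ≤ ⌈(n:ℝ) * p⌉₊ := by
    have h1 : 1 < ⌈(n:ℝ) * p⌉₊ := by
      rw [Nat.lt_ceil]
      exact_mod_cast hnp1
    omega
  have hkn : ⌈(n:ℝ) * p⌉₊ ≤ n := by
    rw [Nat.ceil_le]
    exact_mod_cast le_of_lt hnpn
  have hfilter : (Finset.range (n+1)).filter (fun j : ℕ => (n:ℝ)*p ≤ (j:ℝ))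
      = Finset.Icc (⌈(n:ℝ) * p⌉₊) n := by
    ext j
    simp only [Finset.mem_filter, Finset.mem_range, Finset.mem_Icc]
    constructor
    · rintro ⟨h1, h2⟩
      exact ⟨Nat.ceil_le.mpr h2, by omega⟩
    · rintro ⟨h1, h2⟩
      exact ⟨by omega, Nat.ceil_le.mp h1⟩
  rw [hfilter]
  obtain ⟨m₀, hm₀⟩ : ∃ m₀, ⌈(n:ℝ) * p⌉₊ = m₀ + 2 := ⟨⌈(n:ℝ) * p⌉₊ - 2, by omega⟩
  obtain ⟨r, hr⟩ : ∃ r, n = m₀ + 1 + 1 + r := ⟨n - (m₀ + 2), by omega⟩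
  rw [show ⌈(n:ℝ) * p⌉₊ = m₀ + 1 + 1 by omega]
  rw [tail_repr n p r (m₀+1) (by omega)]
  rw [show n - (m₀+1+1) = r by omega]
  rw [intervalIntegral.integral_const_mul]
  -- q := (m₀+1)/n
  have hq_lt_p : ((m₀:ℝ)+1)/(n:ℝ) < p := by
    rw [div_lt_iff₀ hn0]
    have : (m₀+1 : ℕ) < ⌈(n:ℝ) * p⌉₊ := by omega
    rw [Nat.lt_ceil] at this
    push_cast at this
    linarith
  have hq_pos : 0 < ((m₀:ℝ)+1)/(n:ℝ) := by positivity
  have hchoose_pos : 0 < (n.choose (m₀+1+1) : ℝ) := by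
    have := Nat.choose_pos (show m₀+1+1 ≤ n by omega)
    exact_mod_cast this
  have hcpos : 0 < ((m₀:ℝ)+1+1) * (n.choose (m₀+1+1) : ℝ) := by positivity
  have hJr : Jfun (m₀+1) r = (((m₀:ℝ)+1)+1) * ((n.choose (m₀+1+1)):ℝ)
      * ∫ t in (0:ℝ)..(((m₀:ℝ)+1)/(n:ℝ)), t ^ (m₀+1) * (1 - t) ^ r := by
    unfold Jfun
    rw [show m₀+1+1+r = n by omega]
    have hnn : ((n:ℝ)) = (m₀:ℝ)+1+1+(r:ℝ) := by rw [hr]; push_cast; ring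
    have hb : ((m₀+1:ℕ):ℝ)/(((m₀+1:ℕ):ℝ)+1+(r:ℝ)) = ((m₀:ℝ)+1)/(n:ℝ) := by
      rw [hnn]
      push_cast
      ring
    rw [hb]
    push_cast
    ring
  have hintpos : 0 < ∫ t in (((m₀:ℝ)+1)/(n:ℝ))..p, t ^ (m₀+1) * (1 - t) ^ r := by
    apply intervalIntegral.intervalIntegral_pos_of_pos_on
      (Continuous.intervalIntegrable (by fun_prop) _ _)
    · intro x hx
      obtain ⟨hx1, hx2⟩ := hx
      have hx0 : 0 < x := lt_trans hq_pos hx1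
      have hx3 : x < 1 := lt_trans hx2 hp1
      have : 0 < 1 - x := by linarith
      positivity
    · exact hq_lt_p
  have hsplit : (∫ t in (0:ℝ)..p, t ^ (m₀+1) * (1 - t) ^ r)
      = (∫ t in (0:ℝ)..(((m₀:ℝ)+1)/(n:ℝ)), t ^ (m₀+1) * (1 - t) ^ r)
        + ∫ t in (((m₀:ℝ)+1)/(n:ℝ))..p, t ^ (m₀+1) * (1 - t) ^ r := by
    rw [intervalIntegral.integral_add_adjacent_intervals
      (Continuous.intervalIntegrable (by fun_prop) _ _)
      (Continuous.intervalIntegrable (by fun_prop) _ _)]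
  have hmono : ∀ s : ℕ, Jfun (m₀+1) 0 ≤ Jfun (m₀+1) s := by
    intro s
    induction s with
    | zero => exact le_refl _
    | succ s ih => exact le_trans ih (Jfun_step m₀ s)
  have hq : (1/4 : ℝ) ≤ Jfun (m₀+1) r := by
    have h1 := quarter (m₀+1) (by omega)
    rw [← Jfun_zero (m₀+1)] at h1
    exact le_trans h1 (hmono r)
  rw [hJr] at hq
  push_cast
  push_cast at hq
  nlinarith [hq, hintpos, hcpos, hsplit,
    mul_lt_mul_of_pos_left (lt_add_of_pos_right (∫ t in (0:ℝ)..(((m₀:ℝ)+1)/(n:ℝ)), t ^ (m₀+1) * (1 - t) ^ r) hintpos) hcpos]
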